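/- Let ψ : ℝ² → ℂ² be a Schwartz function and define the density ρ(x) := ‖ψ(x)‖²_{ℂ²}. Then for every k ∈ ℝ², the weighted Fourier transform of ρ obeys ‖k‖ · | ∫_{ℝ²} e^{-i k·x} ρ(x) dx | ≤ 2 · ‖ψ‖_{L²} · ‖∇ψ‖_{L²}, where ‖ψ‖_{L²}² = ∫_{ℝ²} ‖ψ(x)‖²_{ℂ²} dx and ‖∇ψ‖_{L²}² = ∫_{ℝ²} ( ‖∂₁ψ(x)‖²_{ℂ²} + ‖∂₂ψ(x)‖²_{ℂ²} ) dx. -/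

import Mathlib

open MeasureTheory Complex SchwartzMap
open scoped FourierTransform Real RealInnerProductSpace

noncomputable section

namespace WFDBaux

abbrev V : Type := EuclideanSpace ℝ (Fin 2)
abbrev E : Type := EuclideanSpace ℂ (Fin 2)

lemma schwartz_htg {F : Type*} [NormedAddCommGroup F] [NormedSpace ℝ F]
    (f : 𝓢(V, F)) : Function.HasTemperateGrowth ⇑f := by
  refine ⟨f.smooth ⊤, fun n => ?_⟩
  obtain ⟨C, hC⟩ := f.decay' 0 n
  exact ⟨0, C, fun x => by have h := hC x; simp only [pow_zero, one_mul] at h; simp only [pow_zero, mul_one]; exact h⟩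

def B : E →L[ℝ] E →L[ℝ] ℂ :=
  (ContinuousLinearMap.compL ℝ E ℝ ℂ Complex.ofRealCLM).comp (innerSL ℝ)

def rho (ψ : 𝓢(V, E)) : 𝓢(V, ℂ) := bilinLeftCLM B (schwartz_htg ψ) ψ

lemma rho_apply (ψ : 𝓢(V, E)) (x : V) : rho ψ x = ((‖ψ x‖ ^ 2 : ℝ) : ℂ) := by
  show ((inner ℝ (ψ x) (ψ x) : ℝ) : ℂ) = _
  rw [real_inner_self_eq_norm_sq]

def nsq (h : 𝓢(V, E)) : 𝓢(V, ℝ) := bilinLeftCLM (innerSL ℝ) (schwartz_htg h) h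

lemma nsq_apply (h : 𝓢(V, E)) (x : V) : nsq h x = ‖h x‖ ^ 2 := by
  show (inner ℝ (h x) (h x) : ℝ) = _
  rw [real_inner_self_eq_norm_sq]

def D (ψ : 𝓢(V, E)) (i : Fin 2) : 𝓢(V, E) :=
  SchwartzMap.evalCLM ℝ V E (EuclideanSpace.single i (1:ℝ)) (fderivCLM ℝ V E ψ)

lemma D_apply (ψ : 𝓢(V, E)) (i : Fin 2) (x : V) :
    D ψ i x = fderiv ℝ (⇑ψ) x (EuclideanSpace.single i (1:ℝ)) := rfl



lemma integrable_nsq (h : 𝓢(V, E)) : Integrable (fun x : V => ‖h x‖ ^ 2) := by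
  have h1 : ⇑(nsq h) = fun x => ‖h x‖ ^ 2 := funext (nsq_apply h)
  rw [← h1]
  exact (nsq h).integrable

lemma fourier_eq (ψ : 𝓢(V, E)) (k : V) :
    (∫ x : V, Complex.exp (-(Complex.I * ((inner ℝ k x : ℝ) : ℂ))) * ((‖ψ x‖ ^ 2 : ℝ) : ℂ))
      = 𝓕 (⇑(rho ψ)) ((2 * π)⁻¹ • k) := by
  rw [Real.fourier_eq']
  congr 1
  funext x
  rw [rho_apply, smul_eq_mul, real_inner_smul_right]
  have harg : (-2 * π * ((2 * π)⁻¹ * (inner ℝ x k : ℝ))) = -(inner ℝ k x : ℝ) := by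
    rw [real_inner_comm]; field_simp
  rw [harg]
  congr 1
  push_cast
  ring



lemma cs2 (a b c d : ℝ) (hc : 0 ≤ c) (hd : 0 ≤ d) :
    |a| * c + |b| * d ≤ Real.sqrt (a^2 + b^2) * Real.sqrt (c^2 + d^2) := by
  rw [← Real.sqrt_mul (by positivity)]
  rw [Real.le_sqrt (by positivity) (by positivity)]
  nlinarith [sq_nonneg (|a| * d - |b| * c), _root_.sq_abs a, _root_.sq_abs b, abs_nonneg a, abs_nonneg b]


lemma key_bound (ρ : 𝓢(V, ℂ)) (k : V) :
    ‖k‖ ^ 2 * ‖𝓕 (⇑ρ) ((2 * π)⁻¹ • k)‖ ≤ ∫ x : V, ‖fderiv ℝ (⇑ρ) x k‖ := by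
  have hfd : fderiv ℝ ⇑ρ = ⇑(fderivCLM ℝ V ℂ ρ) := by
    funext x; exact (fderivCLM_apply ℝ ρ x).symm
  have hf : Integrable (⇑ρ) := ρ.integrable
  have h'f : Differentiable ℝ ⇑ρ := (ρ.smooth ⊤).differentiable (by simp)
  have hf' : Integrable (fderiv ℝ ⇑ρ) := by rw [hfd]; exact (fderivCLM ℝ V ℂ ρ).integrable
  have key := Real.fourier_fderiv hf h'f hf'
  set ξ : V := (2 * π)⁻¹ • k with hξ
  have hL : Integrable (fun v : V => 𝐞 (-(inner ℝ v ξ : ℝ)) • fderiv ℝ (⇑ρ) v) :=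
    (Real.fourierIntegral_convergent_iff ξ).2 hf'
  have happ : (𝓕 (fderiv ℝ ⇑ρ) ξ) k = ∫ v : V, 𝐞 (-(inner ℝ v ξ : ℝ)) • (fderiv ℝ (⇑ρ) v k) := by
    rw [Real.fourier_eq, ContinuousLinearMap.integral_apply hL]
    rfl
  have hval : (𝓕 (fderiv ℝ ⇑ρ) ξ) k = (Complex.I * ((‖k‖ ^ 2 : ℝ) : ℂ)) • (𝓕 (⇑ρ) ξ) := by
    rw [key]
    rw [VectorFourier.fourierSMulRight_apply]
    have h1 : (-(innerSL ℝ (E := V))) ξ k = -((2 * π)⁻¹ * ‖k‖ ^ 2) := by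
      rw [hξ]
      simp only [ContinuousLinearMap.neg_apply, innerSL_apply_apply, real_inner_smul_left,
        real_inner_self_eq_norm_sq]
    rw [h1]
    have h2π : (2 * π : ℝ) ≠ 0 := by positivity
    have hπ : (π : ℂ) ≠ 0 := by exact_mod_cast Real.pi_ne_zero
    simp only [Complex.real_smul, smul_eq_mul]
    push_cast
    field_simp
  calc ‖k‖ ^ 2 * ‖𝓕 (⇑ρ) ξ‖ = ‖(𝓕 (fderiv ℝ ⇑ρ) ξ) k‖ := by
        rw [hval, norm_smul]
        simp [_root_.abs_of_nonneg (sq_nonneg (‖k‖))]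
    _ = ‖∫ v : V, 𝐞 (-(inner ℝ v ξ : ℝ)) • (fderiv ℝ (⇑ρ) v k)‖ := by rw [happ]
    _ ≤ ∫ v : V, ‖𝐞 (-(inner ℝ v ξ : ℝ)) • (fderiv ℝ (⇑ρ) v k)‖ := norm_integral_le_integral_norm _
    _ = ∫ v : V, ‖fderiv ℝ (⇑ρ) v k‖ := by simp [Circle.norm_smul]


lemma fderiv_rho (ψ : 𝓢(V, E)) (x v : V) :
    fderiv ℝ (⇑(rho ψ)) x v = ((2 * (inner ℝ (ψ x) (fderiv ℝ (⇑ψ) x v) : ℝ) : ℝ) : ℂ) := by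
  have hψ : HasFDerivAt (⇑ψ) (fderiv ℝ (⇑ψ) x) x := ψ.differentiableAt.hasFDerivAt
  have h1 : HasFDerivAt (fun t : V => (inner ℝ (ψ t) (ψ t) : ℝ))
      ((fderivInnerCLM ℝ (ψ x, ψ x)).comp ((fderiv ℝ (⇑ψ) x).prod (fderiv ℝ (⇑ψ) x))) x :=
    HasFDerivAt.inner (𝕜 := ℝ) hψ hψ
  have h2 : HasFDerivAt (⇑(rho ψ))
      (Complex.ofRealCLM.comp ((fderivInnerCLM ℝ (ψ x, ψ x)).comp
        ((fderiv ℝ (⇑ψ) x).prod (fderiv ℝ (⇑ψ) x)))) x :=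
    Complex.ofRealCLM.hasFDerivAt.comp x h1
  rw [h2.fderiv]
  simp only [ContinuousLinearMap.coe_comp', Function.comp_apply,
    ContinuousLinearMap.prod_apply, fderivInnerCLM_apply, Complex.ofRealCLM_apply]
  rw [real_inner_comm (fderiv ℝ (⇑ψ) x v) (ψ x)]
  push_cast
  ring

lemma pt_bound (ψ : 𝓢(V, E)) (k x : V) :
    ‖fderiv ℝ (⇑(rho ψ)) x k‖ ≤
      2 * ‖k‖ * (‖ψ x‖ * Real.sqrt (‖D ψ 0 x‖ ^ 2 + ‖D ψ 1 x‖ ^ 2)) := by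
  rw [fderiv_rho, Complex.norm_real, Real.norm_eq_abs]
  have hdecomp : fderiv ℝ (⇑ψ) x k = k 0 • D ψ 0 x + k 1 • D ψ 1 x := by
    have hk : k = k 0 • EuclideanSpace.single (0 : Fin 2) (1:ℝ)
        + k 1 • EuclideanSpace.single (1 : Fin 2) (1:ℝ) := by
      ext i; fin_cases i <;> simp [EuclideanSpace.single_apply]
    conv_lhs => rw [hk]
    rw [map_add, _root_.map_smul, _root_.map_smul]
    rfl
  have h1 : |(inner ℝ (ψ x) (fderiv ℝ (⇑ψ) x k) : ℝ)| ≤ ‖ψ x‖ * ‖fderiv ℝ (⇑ψ) x k‖ :=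
    abs_real_inner_le_norm _ _
  have h2 : ‖fderiv ℝ (⇑ψ) x k‖ ≤ ‖k‖ * Real.sqrt (‖D ψ 0 x‖ ^ 2 + ‖D ψ 1 x‖ ^ 2) := by
    rw [hdecomp]
    calc ‖k 0 • D ψ 0 x + k 1 • D ψ 1 x‖ ≤ |k 0| * ‖D ψ 0 x‖ + |k 1| * ‖D ψ 1 x‖ := by
          refine (norm_add_le _ _).trans ?_
          simp [norm_smul]
      _ ≤ Real.sqrt ((k 0) ^ 2 + (k 1) ^ 2) * Real.sqrt (‖D ψ 0 x‖ ^ 2 + ‖D ψ 1 x‖ ^ 2) :=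
          cs2 _ _ _ _ (norm_nonneg _) (norm_nonneg _)
      _ = ‖k‖ * Real.sqrt (‖D ψ 0 x‖ ^ 2 + ‖D ψ 1 x‖ ^ 2) := by
          congr 1
          rw [EuclideanSpace.norm_eq]
          simp [Fin.sum_univ_two, Real.norm_eq_abs, _root_.sq_abs]
  have h3 := mul_le_mul_of_nonneg_left h2 (norm_nonneg (ψ x))
  rw [abs_mul, _root_.abs_two]
  nlinarith [h1, h3]

def g (ψ : 𝓢(V, E)) : V → ℝ := fun x => Real.sqrt (‖D ψ 0 x‖ ^ 2 + ‖D ψ 1 x‖ ^ 2)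

lemma g_cont (ψ : 𝓢(V, E)) : Continuous (g ψ) :=
  Real.continuous_sqrt.comp
    (((D ψ 0).continuous.norm.pow 2).add ((D ψ 1).continuous.norm.pow 2))

lemma g_sq_int (ψ : 𝓢(V, E)) :
    Integrable (fun x : V => ‖D ψ 0 x‖ ^ 2 + ‖D ψ 1 x‖ ^ 2) :=
  (integrable_nsq _).add (integrable_nsq _)

lemma csE (ψ : 𝓢(V, E)) :
    ∫ x : V, ‖ψ x‖ * g ψ x ≤
      Real.sqrt (∫ x : V, ‖ψ x‖ ^ 2) *
        Real.sqrt (∫ x : V, (‖D ψ 0 x‖ ^ 2 + ‖D ψ 1 x‖ ^ 2)) := by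
  have hpq : Real.HolderConjugate 2 2 := Real.HolderConjugate.two_two
  have h2 : ENNReal.ofReal (2 : ℝ) = 2 := by norm_num
  have hgsq : (fun x : V => g ψ x ^ 2) = fun x : V => ‖D ψ 0 x‖ ^ 2 + ‖D ψ 1 x‖ ^ 2 :=
    funext fun x => Real.sq_sqrt (by positivity)
  have hfm : MemLp (fun x : V => ‖ψ x‖) (ENNReal.ofReal (2:ℝ)) volume := by
    rw [h2, memLp_two_iff_integrable_sq (ψ.continuous.norm.aestronglyMeasurable)]
    exact integrable_nsq ψ
  have hgm : MemLp (g ψ) (ENNReal.ofReal (2:ℝ)) volume := by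
    rw [h2, memLp_two_iff_integrable_sq (g_cont ψ).aestronglyMeasurable, hgsq]
    exact g_sq_int ψ
  have key := integral_mul_le_Lp_mul_Lq_of_nonneg hpq
    (Filter.Eventually.of_forall fun x => norm_nonneg (ψ x))
    (Filter.Eventually.of_forall fun x => Real.sqrt_nonneg _) hfm hgm
  simp only [Real.rpow_two] at key
  calc ∫ x : V, ‖ψ x‖ * g ψ x
      ≤ (∫ x : V, ‖ψ x‖ ^ 2) ^ (1/(2:ℝ)) * (∫ x : V, g ψ x ^ 2) ^ (1/(2:ℝ)) := key
    _ = _ := by rw [hgsq, ← Real.sqrt_eq_rpow, ← Real.sqrt_eq_rpow]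

lemma mul_int (ψ : 𝓢(V, E)) : Integrable (fun x : V => ‖ψ x‖ * g ψ x) := by
  refine Integrable.mono' (((integrable_nsq ψ).add (g_sq_int ψ)).div_const 2)
    ((ψ.continuous.norm.mul (g_cont ψ)).aestronglyMeasurable)
    (Filter.Eventually.of_forall fun x => ?_)
  have hgnn : (0:ℝ) ≤ g ψ x := Real.sqrt_nonneg _
  simp only [Pi.add_apply]
  rw [Real.norm_eq_abs, _root_.abs_of_nonneg (mul_nonneg (norm_nonneg _) hgnn)]
  have hg2 : g ψ x ^ 2 = ‖D ψ 0 x‖ ^ 2 + ‖D ψ 1 x‖ ^ 2 := Real.sq_sqrt (by positivity)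
  nlinarith [sq_nonneg (‖ψ x‖ - g ψ x), hg2, hgnn]

lemma main (ψ : 𝓢(V, E)) (k : V) (hk : k ≠ 0) :
    ‖k‖ * ‖𝓕 (⇑(rho ψ)) ((2 * π)⁻¹ • k)‖ ≤
      2 * Real.sqrt (∫ x : V, ‖ψ x‖ ^ 2) *
        Real.sqrt (∫ x : V, (‖D ψ 0 x‖ ^ 2 + ‖D ψ 1 x‖ ^ 2)) := by
  have hk' : (0:ℝ) < ‖k‖ := norm_pos_iff.2 hk
  have h1 := key_bound (rho ψ) k
  have h2 : (∫ x : V, ‖fderiv ℝ (⇑(rho ψ)) x k‖) ≤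
      2 * ‖k‖ * ∫ x : V, ‖ψ x‖ * g ψ x := by
    have h := integral_mono_of_nonneg
      (Filter.Eventually.of_forall fun x => norm_nonneg _)
      ((mul_int ψ).const_mul (2 * ‖k‖))
      (Filter.Eventually.of_forall fun x => pt_bound ψ k x)
    rwa [integral_const_mul] at h
  have h3 := csE ψ
  have h5 : ‖k‖ ^ 2 * ‖𝓕 (⇑(rho ψ)) ((2 * π)⁻¹ • k)‖ ≤
      2 * ‖k‖ * (Real.sqrt (∫ x : V, ‖ψ x‖ ^ 2) *
        Real.sqrt (∫ x : V, (‖D ψ 0 x‖ ^ 2 + ‖D ψ 1 x‖ ^ 2))) :=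
    h1.trans (h2.trans (by nlinarith [h3, hk'.le]))
  refine le_of_mul_le_mul_left ?_ hk'
  nlinarith [h5]

lemma main2 (ψ : 𝓢(V, E)) (k : V) (hk : k ≠ 0) :
    ‖k‖ * ‖𝓕 (⇑(rho ψ)) ((2 * π)⁻¹ • k)‖ ≤
      2 * Real.sqrt (∫ x : V, ‖ψ x‖ ^ 2) *
        Real.sqrt (∫ x : V,
          (‖fderiv ℝ (⇑ψ) x (EuclideanSpace.single 0 1)‖ ^ 2 +
            ‖fderiv ℝ (⇑ψ) x (EuclideanSpace.single 1 1)‖ ^ 2)) := by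
  simpa only [D_apply] using main ψ k hk

end WFDBaux

set_option maxHeartbeats 1000000 in
open WFDBaux in
/-- For a Schwartz function `ψ : ℝ² → ℂ²` with density
`ρ(x) = ‖ψ(x)‖²`, the weighted Fourier transform of `ρ` obeys
`‖k‖ |∫ e^{-ik·x} ρ(x) dx| ≤ 2 ‖ψ‖_{L²} ‖∇ψ‖_{L²}`. -/
theorem weighted_fourier_density_bound
    (ψ : SchwartzMap (EuclideanSpace ℝ (Fin 2)) (EuclideanSpace ℂ (Fin 2)))
    (k : EuclideanSpace ℝ (Fin 2)) :
    ‖k‖ * ‖∫ x : EuclideanSpace ℝ (Fin 2),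
        Complex.exp (-(Complex.I * ((inner ℝ k x : ℝ) : ℂ))) * ((‖ψ x‖ ^ 2 : ℝ) : ℂ)‖ ≤
      2 * Real.sqrt (∫ x : EuclideanSpace ℝ (Fin 2), ‖ψ x‖ ^ 2) *
        Real.sqrt (∫ x : EuclideanSpace ℝ (Fin 2),
          (‖fderiv ℝ (⇑ψ) x (EuclideanSpace.single 0 1)‖ ^ 2 +
            ‖fderiv ℝ (⇑ψ) x (EuclideanSpace.single 1 1)‖ ^ 2)) := by
  rcases eq_or_ne k 0 with hk | hk
  · have h0 : ‖k‖ = 0 := by simp [hk]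
    rw [h0, zero_mul]
    exact mul_nonneg (mul_nonneg (by norm_num) (Real.sqrt_nonneg _)) (Real.sqrt_nonneg _)
  · rw [fourier_eq ψ k]
    exact main2 ψ k hk
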